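/- If k is a descent of the diagram D = D(w) for a permutation w (equivalently k ∈ Des(w)), then s_k D(w) = D(w s_k) is k-full, and consequently R_{k+1} 𝔖_{w s_k} = R_k 𝔖_{w s_k}. -/

import Mathlib

open MvPolynomial

/-- The Bergeron–Sottile operator `R_k` on the polynomial ring `ℤ[x_1, x_2, …]`. -/
noncomputable def Rop (k : ℕ+) : MvPolynomial ℕ+ ℤ →ₐ[ℤ] MvPolynomial ℕ+ ℤ :=
  aeval fun i => if i < k then X i else if i = k then 0 else X (i - 1)

/-- The Rothe diagram of a permutation `w` of the positive integers. -/
def RotheDiagram (w : Equiv.Perm ℕ+) : Set (ℕ+ × ℕ+) :=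
  {p | p.2 < w p.1 ∧ p.1 < w.symm p.2}

lemma Rop_rename_swap (k : ℕ+) (p : MvPolynomial ℕ+ ℤ) :
    Rop (k + 1) (rename (Equiv.swap k (k + 1)) p) = Rop k p := by
  unfold Rop
  rw [aeval_rename]
  have hfun : ((fun i => if i < k + 1 then X i else if i = k + 1 then 0 else X (i - 1)) ∘
      (Equiv.swap k (k + 1) : ℕ+ → ℕ+)) =
      (fun i : ℕ+ => (if i < k then X i else if i = k then 0 else X (i - 1) : MvPolynomial ℕ+ ℤ)) := by
    funext i
    simp only [Function.comp]
    rcases eq_or_ne i k with rfl | hik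
    · rw [Equiv.swap_apply_left]
      simp
    · rcases eq_or_ne i (k + 1) with rfl | hik1
      · rw [Equiv.swap_apply_right]
        have h1 : k < k + 1 := PNat.lt_add_right k 1
        have h2 : ¬ (k + 1 < k) := by simp [le_of_lt h1]
        have h3 : (k + 1 : ℕ+) - 1 = k := PNat.add_sub
        simp [h1, h2, hik, h3]
      · rw [Equiv.swap_apply_of_ne_of_ne hik hik1]
        rcases lt_or_ge i k with h | h
        · simp [h, h.trans (PNat.lt_add_right k 1)]
        · have hki : k < i := lt_of_le_of_ne h (fun e => hik e.symm)
          have h1 : ¬ i < k := not_lt.mpr h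
          have h2 : ¬ i < k + 1 := by
            rw [not_lt]
            exact PNat.add_one_le_iff.mpr hki
          simp [h1, h2, hik, hik1]
  rw [hfun]

/-- If `k ∈ Des(w)`, then `s_k D(w) = D(w s_k)` is `k`-full, and consequently
`R_{k+1} 𝔖_{w s_k} = R_k 𝔖_{w s_k}`.  (`S` is the Schubert family, characterized
by the staircase base case and divided-difference recursion.) -/
theorem stmt16 (S : Equiv.Perm ℕ+ → MvPolynomial ℕ+ ℤ)
    (hbase : ∀ (n : ℕ+) (w : Equiv.Perm ℕ+),
      (∀ i : ℕ+, i ≤ n → ((w i : ℕ) + (i : ℕ) = (n : ℕ) + 1)) →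
      (∀ i : ℕ+, n < i → w i = i) →
      S w = ∏ i ∈ Finset.Icc (1 : ℕ+) n, X i ^ ((n : ℕ) - (i : ℕ)))
    (hdd : ∀ (w : Equiv.Perm ℕ+) (k : ℕ+), w (k + 1) < w k →
      S w - rename (Equiv.swap k (k + 1)) (S w) =
        (X k - X (k + 1)) * S (w * Equiv.swap k (k + 1)))
    (w : Equiv.Perm ℕ+) (n : ℕ+) (hw : ∀ i : ℕ+, n < i → w i = i)
    (k : ℕ+) (hk : w (k + 1) < w k) :
    (∀ j : ℕ+, (k, j) ∈ RotheDiagram (w * Equiv.swap k (k + 1)) →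
        (k + 1, j) ∈ RotheDiagram (w * Equiv.swap k (k + 1))) ∧
      Rop (k + 1) (S (w * Equiv.swap k (k + 1))) =
        Rop k (S (w * Equiv.swap k (k + 1))) := by
  set σ := Equiv.swap k (k + 1) with hσ
  set v := w * σ with hv
  have hvk : v k = w (k + 1) := by
    simp [hv, hσ, Equiv.Perm.mul_apply, Equiv.swap_apply_left]
  have hvk1 : v (k + 1) = w k := by
    simp [hv, hσ, Equiv.Perm.mul_apply, Equiv.swap_apply_right]
  constructor
  · rintro j ⟨h1, h2⟩
    simp only [RotheDiagram, Set.mem_setOf_eq] at h1 h2 ⊢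
    have hjk : j < v (k + 1) := by
      rw [hvk1]; rw [hvk] at h1; exact h1.trans hk
    refine ⟨hjk, ?_⟩
    have hne : v.symm j ≠ k + 1 := by
      intro h
      have : v (k + 1) = j := by rw [← h, Equiv.apply_symm_apply]
      exact absurd (this ▸ hjk) (lt_irrefl _)
    exact lt_of_le_of_ne (PNat.add_one_le_iff.mpr h2) (Ne.symm hne)
  · -- symmetry of S v in x_k, x_{k+1}
    have heq := hdd w k hk
    have heq2 := congrArg (rename (σ : ℕ+ → ℕ+)) heq
    rw [map_sub, map_mul, map_sub] at heq2
    have hσσ : ∀ p : MvPolynomial ℕ+ ℤ, rename (σ : ℕ+ → ℕ+) (rename (σ : ℕ+ → ℕ+) p) = p := by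
      intro p
      rw [rename_rename]
      have : (σ : ℕ+ → ℕ+) ∘ (σ : ℕ+ → ℕ+) = id := by
        funext i; simp [hσ, Equiv.swap_apply_self]
      rw [this, rename_id, AlgHom.id_apply]
    rw [hσσ, rename_X, rename_X] at heq2
    have hsk : (σ : ℕ+ → ℕ+) k = k + 1 := Equiv.swap_apply_left _ _
    have hsk1 : (σ : ℕ+ → ℕ+) (k + 1) = k := Equiv.swap_apply_right _ _
    rw [hsk, hsk1] at heq2
    -- heq : S w - rename σ (S w) = (X k - X (k+1)) * S v
    -- heq2 : rename σ (S w) - S w = (X (k+1) - X k) * rename σ (S v)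
    have hsum : ((X k : MvPolynomial ℕ+ ℤ) - X (k + 1)) * (S v - rename (σ : ℕ+ → ℕ+) (S v)) = 0 := by
      have := congrArg₂ (· + ·) heq heq2
      rw [sub_add_sub_cancel', sub_self] at this
      have h2 : ((X (k+1) : MvPolynomial ℕ+ ℤ) - X k) = -((X k : MvPolynomial ℕ+ ℤ) - X (k+1)) := by ring
      rw [h2] at this
      linear_combination -this
    have hXne : ((X k : MvPolynomial ℕ+ ℤ) - X (k + 1)) ≠ 0 := by
      intro h
      have := sub_eq_zero.mp h
      have hkne : k ≠ k + 1 := by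
        intro e
        exact absurd e (ne_of_lt (PNat.lt_add_right k 1))
      exact hkne (X_injective this)
    have hsym : rename (σ : ℕ+ → ℕ+) (S v) = S v := by
      rcases mul_eq_zero.mp hsum with h | h
      · exact absurd h hXne
      · have := sub_eq_zero.mp h
        exact this.symm
    calc Rop (k + 1) (S v) = Rop (k + 1) (rename (σ : ℕ+ → ℕ+) (S v)) := by rw [hsym]
      _ = Rop k (S v) := Rop_rename_swap k (S v)
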